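/- Let Ã(0), …, Ã(T) ∈ ℝ^{n×n} be entrywise nonnegative, let the entries of K̃(k;·) be nonnegative posynomials of θ ∈ ℝ^m_{>0}, let x(0) ∈ ℝ^n be entrywise nonnegative, let ℓ(k) ∈ ℝ^n be entrywise positive for k = 1, …, T+1, let ε > 0, let p > 0, and let J̄ > 0. Define x(k;θ) = (Ã(k−1)+K̃(k−1;θ))⋯(Ã(0)+K̃(0;θ))x(0) and assume x_i(k;exp[z]) > 0 for all z ∈ ℝ^m, 1 ≤ k ≤ T+1, and 1 ≤ i ≤ n. Then the feasible region of the log-transformed performance-constrained problem, { z ∈ ℝ^m : log(x(k;exp[z])^⊤ℓ(k)) < log ε for all 1 ≤ k ≤ T+1, and log((∑_{k=1}^{T+1}∑_{i=1}^n x_i(k;exp[z])^p)^{1/p}) ≤ log J̄ }, is a convex subset of ℝ^m. -/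

import Mathlib

/-- A nonnegative posynomial on the positive orthant: a finite sum of monomials
with nonnegative coefficients and real exponents (possibly the zero function). -/
def IsNonnegPosynomial (m : ℕ) (f : (Fin m → ℝ) → ℝ) : Prop :=
  ∃ (N : ℕ) (c : Fin N → ℝ) (a : Fin N → Fin m → ℝ),
    (∀ j, 0 ≤ c j) ∧
    ∀ v : Fin m → ℝ, (∀ i, 0 < v i) → f v = ∑ j, c j * ∏ i, (v i) ^ (a j i)

/-- The state trajectory of the parametrized system
x(k+1;θ) = (Ã(k) + K̃(k;θ)) x(k;θ), x(0;θ) = x(0). -/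
def paramTraj (n m : ℕ) (Atil : ℕ → Matrix (Fin n) (Fin n) ℝ)
    (Ktil : ℕ → (Fin m → ℝ) → Matrix (Fin n) (Fin n) ℝ)
    (x0 : Fin n → ℝ) : ℕ → (Fin m → ℝ) → Fin n → ℝ
  | 0, _ => x0
  | k + 1, θ => (Atil k + Ktil k θ).mulVec (paramTraj n m Atil Ktil x0 k θ)

private lemma posyn_const (m : ℕ) {r : ℝ} (hr : 0 ≤ r) :
    IsNonnegPosynomial m (fun _ => r) :=
  ⟨1, fun _ => r, fun _ _ => 0, fun _ => hr, by intro v hv; simp⟩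

private lemma posyn_add {m : ℕ} {f g : (Fin m → ℝ) → ℝ}
    (hf : IsNonnegPosynomial m f) (hg : IsNonnegPosynomial m g) :
    IsNonnegPosynomial m (fun v => f v + g v) := by
  obtain ⟨N1, c1, a1, hc1, he1⟩ := hf
  obtain ⟨N2, c2, a2, hc2, he2⟩ := hg
  refine ⟨N1 + N2, Fin.append c1 c2, Fin.append a1 a2, ?_, ?_⟩
  · refine Fin.addCases (fun j => ?_) (fun j => ?_)
    · rw [Fin.append_left]; exact hc1 j
    · rw [Fin.append_right]; exact hc2 j
  · intro v hv
    show f v + g v = _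
    rw [he1 v hv, he2 v hv, Fin.sum_univ_add]
    congr 1 <;> refine Finset.sum_congr rfl fun j _ => ?_
    · rw [Fin.append_left, Fin.append_left]
    · rw [Fin.append_right, Fin.append_right]

private lemma posyn_mul {m : ℕ} {f g : (Fin m → ℝ) → ℝ}
    (hf : IsNonnegPosynomial m f) (hg : IsNonnegPosynomial m g) :
    IsNonnegPosynomial m (fun v => f v * g v) := by
  obtain ⟨N1, c1, a1, hc1, he1⟩ := hf
  obtain ⟨N2, c2, a2, hc2, he2⟩ := hg
  refine ⟨N1 * N2,
    fun j => c1 (finProdFinEquiv.symm j).1 * c2 (finProdFinEquiv.symm j).2,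
    fun j i => a1 (finProdFinEquiv.symm j).1 i + a2 (finProdFinEquiv.symm j).2 i,
    fun j => mul_nonneg (hc1 _) (hc2 _), ?_⟩
  intro v hv
  show f v * g v = _
  rw [he1 v hv, he2 v hv, Finset.sum_mul_sum]
  rw [← Equiv.sum_comp finProdFinEquiv
    (fun j => (c1 (finProdFinEquiv.symm j).1 * c2 (finProdFinEquiv.symm j).2) *
      ∏ i, (v i) ^ (a1 (finProdFinEquiv.symm j).1 i + a2 (finProdFinEquiv.symm j).2 i))]
  rw [Fintype.sum_prod_type]
  refine Finset.sum_congr rfl fun j1 _ => Finset.sum_congr rfl fun j2 _ => ?_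
  simp only [Equiv.symm_apply_apply]
  have : ∏ x : Fin m, v x ^ (a1 j1 x + a2 j2 x)
      = (∏ i, v i ^ a1 j1 i) * (∏ i, v i ^ a2 j2 i) := by
    rw [← Finset.prod_mul_distrib]
    exact Finset.prod_congr rfl fun i _ => Real.rpow_add (hv i) _ _
  rw [this]
  ring

private lemma posyn_sum {m : ℕ} {ι : Type*} (s : Finset ι) (f : ι → (Fin m → ℝ) → ℝ)
    (hf : ∀ i ∈ s, IsNonnegPosynomial m (f i)) :
    IsNonnegPosynomial m (fun v => ∑ i ∈ s, f i v) := by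
  classical
  induction s using Finset.cons_induction with
  | empty => simpa using posyn_const m le_rfl
  | cons i s hi ih =>
      simp only [Finset.sum_cons]
      exact posyn_add (hf i (Finset.mem_cons_self i s))
        (ih fun j hj => hf j (Finset.mem_cons_of_mem hj))


private lemma holder_two {N : ℕ} (u v : Fin N → ℝ) (hu : ∀ j, 0 ≤ u j) (hv : ∀ j, 0 ≤ v j)
    {a b : ℝ} (ha : 0 < a) (hb : 0 < b) (hab : a + b = 1) :
    ∑ j, (u j) ^ a * (v j) ^ b ≤ (∑ j, u j) ^ a * (∑ j, v j) ^ b := by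
  have hpq : Real.HolderConjugate (1 / a) (1 / b) := by
    constructor
    · rw [one_div, one_div, inv_inv, inv_inv, inv_one]; exact hab
    · positivity
    · positivity
  have h := Real.inner_le_Lp_mul_Lq_of_nonneg Finset.univ hpq
    (f := fun j => u j ^ a) (g := fun j => v j ^ b)
    (fun i _ => Real.rpow_nonneg (hu i) a) (fun i _ => Real.rpow_nonneg (hv i) b)
  have e1 : ∀ j, (u j ^ a) ^ (1 / a) = u j := fun j => by
    rw [← Real.rpow_mul (hu j), mul_one_div, div_self ha.ne', Real.rpow_one]
  have e2 : ∀ j, (v j ^ b) ^ (1 / b) = v j := fun j => by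
    rw [← Real.rpow_mul (hv j), mul_one_div, div_self hb.ne', Real.rpow_one]
  simp only [e1, e2, one_div_one_div] at h
  exact h

private lemma logexp_convexOn {m : ℕ} {f : (Fin m → ℝ) → ℝ} (hf : IsNonnegPosynomial m f) :
    ConvexOn ℝ Set.univ (fun z : Fin m → ℝ => Real.log (f (fun i => Real.exp (z i)))) := by
  obtain ⟨N, c, a, hc, he⟩ := hf
  have key : ∀ z : Fin m → ℝ,
      f (fun i => Real.exp (z i)) = ∑ j, c j * Real.exp (∑ i, a j i * z i) := by
    intro z
    rw [he _ (fun i => Real.exp_pos _)]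
    refine Finset.sum_congr rfl fun j _ => ?_
    congr 1
    rw [Real.exp_sum]
    exact Finset.prod_congr rfl fun i _ => by rw [mul_comm, Real.exp_mul]
  simp only [key]
  by_cases hzero : ∀ j, c j = 0
  · simp only [hzero, zero_mul, Finset.sum_const_zero, Real.log_zero]
    exact convexOn_const 0 convex_univ
  · push_neg at hzero
    obtain ⟨j0, hj0⟩ := hzero
    set F : (Fin m → ℝ) → ℝ := fun z => ∑ j, c j * Real.exp (∑ i, a j i * z i) with hF
    have hFpos : ∀ z, 0 < F z := fun z =>
      Finset.sum_pos' (fun j _ => mul_nonneg (hc j) (Real.exp_pos _).le)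
        ⟨j0, Finset.mem_univ _, mul_pos ((hc j0).lt_of_ne (Ne.symm hj0)) (Real.exp_pos _)⟩
    refine ⟨convex_univ, fun x _ y _ α β hα hβ hαβ => ?_⟩
    rcases eq_or_lt_of_le hα with rfl | hα'
    · rw [zero_add] at hαβ; subst hαβ; simp
    rcases eq_or_lt_of_le hβ with rfl | hβ'
    · rw [add_zero] at hαβ; subst hαβ; simp
    simp only [smul_eq_mul]
    have hL : ∀ j : Fin N, (∑ i, a j i * (α • x + β • y) i)
        = α * (∑ i, a j i * x i) + β * (∑ i, a j i * y i) := by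
      intro j
      simp only [Pi.add_apply, Pi.smul_apply, smul_eq_mul, Finset.mul_sum]
      rw [← Finset.sum_add_distrib]
      exact Finset.sum_congr rfl fun i _ => by ring
    have hcomb : F (α • x + β • y)
        ≤ F x ^ α * F y ^ β := by
      have hrw : F (α • x + β • y) = ∑ j, (c j * Real.exp (∑ i, a j i * x i)) ^ α *
          (c j * Real.exp (∑ i, a j i * y i)) ^ β := by
        refine Finset.sum_congr rfl fun j _ => ?_
        rw [hL j, Real.exp_add]
        rw [Real.mul_rpow (hc j) (Real.exp_pos _).le, Real.mul_rpow (hc j) (Real.exp_pos _).le]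
        rw [← Real.exp_mul, ← Real.exp_mul]
        have : c j = c j ^ α * c j ^ β := by
          rw [← Real.rpow_add' (hc j) (by rw [hαβ]; norm_num), hαβ, Real.rpow_one]
        calc c j * (Real.exp (α * ∑ i, a j i * x i) * Real.exp (β * ∑ i, a j i * y i))
            = (c j ^ α * c j ^ β) *
              (Real.exp (α * ∑ i, a j i * x i) * Real.exp (β * ∑ i, a j i * y i)) := by
              rw [← this]
          _ = c j ^ α * Real.exp ((∑ i, a j i * x i) * α) *
              (c j ^ β * Real.exp ((∑ i, a j i * y i) * β)) := by ring_nf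
      rw [hrw]
      exact holder_two _ _ (fun j => mul_nonneg (hc j) (Real.exp_pos _).le)
        (fun j => mul_nonneg (hc j) (Real.exp_pos _).le) hα' hβ' hαβ
    calc Real.log (F (α • x + β • y)) ≤ Real.log (F x ^ α * F y ^ β) :=
          (Real.log_le_log_iff (hFpos _) (mul_pos (Real.rpow_pos_of_pos (hFpos x) α) (Real.rpow_pos_of_pos (hFpos y) β))).2 hcomb
      _ = α * Real.log (F x) + β * Real.log (F y) := by
          rw [Real.log_mul (Real.rpow_pos_of_pos (hFpos x) α).ne' (Real.rpow_pos_of_pos (hFpos y) β).ne',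
            Real.log_rpow (hFpos x), Real.log_rpow (hFpos y)]


private lemma convexOn_exp_comp {m : ℕ} {f : (Fin m → ℝ) → ℝ}
    (hf : ConvexOn ℝ Set.univ f) :
    ConvexOn ℝ Set.univ (fun z => Real.exp (f z)) := by
  refine ⟨convex_univ, fun x _ y _ α β hα hβ hαβ => ?_⟩
  simp only [smul_eq_mul]
  calc Real.exp (f (α • x + β • y)) ≤ Real.exp (α * f x + β * f y) :=
        Real.exp_le_exp.2 (by
          simpa [smul_eq_mul] using hf.2 (Set.mem_univ x) (Set.mem_univ y) hα hβ hαβ)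
    _ ≤ α * Real.exp (f x) + β * Real.exp (f y) := by
        simpa [smul_eq_mul] using
          convexOn_exp.2 (Set.mem_univ (f x)) (Set.mem_univ (f y)) hα hβ hαβ

private lemma convexOn_finset_sum {m : ℕ} {ι : Type*} (s : Finset ι)
    (f : ι → (Fin m → ℝ) → ℝ) (hf : ∀ i ∈ s, ConvexOn ℝ Set.univ (f i)) :
    ConvexOn ℝ Set.univ (fun z => ∑ i ∈ s, f i z) := by
  classical
  induction s using Finset.cons_induction with
  | empty => simpa using convexOn_const (0 : ℝ) convex_univ
  | cons i s hi ih =>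
      simp only [Finset.sum_cons]
      exact (hf i (Finset.mem_cons_self i s)).add
        (ih fun j hj => hf j (Finset.mem_cons_of_mem hj))

private lemma convexOn_const_mul {m : ℕ} {f : (Fin m → ℝ) → ℝ} {c : ℝ} (hc : 0 ≤ c)
    (hf : ConvexOn ℝ Set.univ f) :
    ConvexOn ℝ Set.univ (fun z => c * f z) := by
  simpa [smul_eq_mul] using hf.smul hc

/-- The feasible region of the log-transformed performance-constrained
finite-time control problem,
{ z : log(x(k;exp[z])^⊤ℓ(k)) < log ε for all 1 ≤ k ≤ T+1,
      log((∑_{k=1}^{T+1}∑_i x_i(k;exp[z])^p)^{1/p}) ≤ log J̄ },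
is a convex subset of ℝ^m. -/
theorem performance_constrained_feasible_region_convex
    (n m T : ℕ) (Atil : ℕ → Matrix (Fin n) (Fin n) ℝ)
    (Ktil : ℕ → (Fin m → ℝ) → Matrix (Fin n) (Fin n) ℝ)
    (hA : ∀ k ≤ T, ∀ i j, 0 ≤ Atil k i j)
    (hK : ∀ k ≤ T, ∀ i j, IsNonnegPosynomial m (fun θ => Ktil k θ i j))
    (x0 : Fin n → ℝ) (hx0 : ∀ i, 0 ≤ x0 i)
    (ℓ : ℕ → Fin n → ℝ) (hℓ : ∀ k, 1 ≤ k → k ≤ T + 1 → ∀ i, 0 < ℓ k i)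
    (ε : ℝ) (hε : 0 < ε) (p : ℝ) (hp : 0 < p) (Jbar : ℝ) (hJbar : 0 < Jbar)
    (hpos : ∀ z : Fin m → ℝ, ∀ k, 1 ≤ k → k ≤ T + 1 → ∀ i,
      0 < paramTraj n m Atil Ktil x0 k (fun i => Real.exp (z i)) i) :
    Convex ℝ
      { z : Fin m → ℝ |
        (∀ k, 1 ≤ k → k ≤ T + 1 →
          Real.log (∑ i, paramTraj n m Atil Ktil x0 k (fun i => Real.exp (z i)) i * ℓ k i)
            < Real.log ε) ∧
        Real.log ((∑ k ∈ Finset.Icc 1 (T + 1), ∑ i,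
            (paramTraj n m Atil Ktil x0 k (fun i => Real.exp (z i)) i) ^ p) ^ (1 / p))
          ≤ Real.log Jbar } := by
  classical
  rcases Nat.eq_zero_or_pos n with hn | hn
  · subst hn
    intro x hx y hy α β hα hβ hαβ
    simp only [Set.mem_setOf_eq, Finset.univ_eq_empty, Finset.sum_empty,
      Finset.sum_const_zero] at hx ⊢
    exact hx
  haveI : Nonempty (Fin n) := Fin.pos_iff_nonempty.mp hn
  -- each trajectory entry is a nonnegative posynomial of θ
  have htraj : ∀ k, k ≤ T + 1 → ∀ i, IsNonnegPosynomial m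
      (fun θ => paramTraj n m Atil Ktil x0 k θ i) := by
    intro k
    induction k with
    | zero => exact fun _ i => posyn_const m (hx0 i)
    | succ k ih =>
        intro hk i
        have hkT : k ≤ T := by omega
        have hrw : (fun θ => paramTraj n m Atil Ktil x0 (k + 1) θ i)
            = fun θ => ∑ j, (Atil k i j + Ktil k θ i j) *
                paramTraj n m Atil Ktil x0 k θ j := by
          funext θ
          simp [paramTraj, Matrix.mulVec, dotProduct, Matrix.add_apply]
        rw [hrw]
        exact posyn_sum Finset.univ _ fun j _ =>
          posyn_mul (posyn_add (posyn_const m (hA k hkT i j)) (hK k hkT i j))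
            (ih (by omega) j)
  -- constraint-1 functions are convex
  have hg : ∀ k, 1 ≤ k → k ≤ T + 1 → ConvexOn ℝ Set.univ
      (fun z : Fin m → ℝ => Real.log
        (∑ i, paramTraj n m Atil Ktil x0 k (fun i => Real.exp (z i)) i * ℓ k i)) := by
    intro k hk1 hk2
    exact logexp_convexOn (posyn_sum Finset.univ
      (fun i θ => paramTraj n m Atil Ktil x0 k θ i * ℓ k i)
      (fun i _ => posyn_mul (htraj k hk2 i) (posyn_const m (hℓ k hk1 hk2 i).le)))
  -- the performance sum is convex
  have hG : ConvexOn ℝ Set.univ (fun z : Fin m → ℝ =>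
      ∑ k ∈ Finset.Icc 1 (T + 1), ∑ i,
        (paramTraj n m Atil Ktil x0 k (fun i => Real.exp (z i)) i) ^ p) := by
    have hGrw : (fun z : Fin m → ℝ => ∑ k ∈ Finset.Icc 1 (T + 1), ∑ i,
          (paramTraj n m Atil Ktil x0 k (fun i => Real.exp (z i)) i) ^ p)
        = fun z => ∑ k ∈ Finset.Icc 1 (T + 1), ∑ i, Real.exp
            (p * Real.log (paramTraj n m Atil Ktil x0 k (fun i => Real.exp (z i)) i)) := by
      funext z
      refine Finset.sum_congr rfl fun k hk => Finset.sum_congr rfl fun i _ => ?_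
      obtain ⟨hk1, hk2⟩ := Finset.mem_Icc.mp hk
      rw [Real.rpow_def_of_pos (hpos z k hk1 hk2 i), mul_comm]
    rw [hGrw]
    refine convexOn_finset_sum _
      (fun k z => ∑ i, Real.exp
        (p * Real.log (paramTraj n m Atil Ktil x0 k (fun i => Real.exp (z i)) i)))
      (fun k hk => ?_)
    obtain ⟨hk1, hk2⟩ := Finset.mem_Icc.mp hk
    refine convexOn_finset_sum _
      (fun i z => Real.exp
        (p * Real.log (paramTraj n m Atil Ktil x0 k (fun i => Real.exp (z i)) i)))
      (fun i _ => ?_)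
    exact convexOn_exp_comp (convexOn_const_mul hp.le (logexp_convexOn (htraj k hk2 i)))
  -- positivity of the performance sum
  have hGpos : ∀ z : Fin m → ℝ, 0 < ∑ k ∈ Finset.Icc 1 (T + 1), ∑ i,
      (paramTraj n m Atil Ktil x0 k (fun i => Real.exp (z i)) i) ^ p := by
    intro z
    refine Finset.sum_pos (fun k hk => ?_)
      ⟨1, Finset.mem_Icc.mpr ⟨le_refl 1, Nat.le_add_left 1 T⟩⟩
    obtain ⟨hk1, hk2⟩ := Finset.mem_Icc.mp hk
    exact Finset.sum_pos
      (fun i _ => Real.rpow_pos_of_pos (hpos z k hk1 hk2 i) p) Finset.univ_nonempty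
  -- rewrite constraint 2 as a sublevel condition
  have hiff : ∀ z : Fin m → ℝ,
      (Real.log ((∑ k ∈ Finset.Icc 1 (T + 1), ∑ i,
          (paramTraj n m Atil Ktil x0 k (fun i => Real.exp (z i)) i) ^ p) ^ (1 / p))
        ≤ Real.log Jbar)
      ↔ (∑ k ∈ Finset.Icc 1 (T + 1), ∑ i,
          (paramTraj n m Atil Ktil x0 k (fun i => Real.exp (z i)) i) ^ p)
          ≤ Real.exp (p * Real.log Jbar) := by
    intro z
    rw [Real.log_rpow (hGpos z), ← Real.log_le_iff_le_exp (hGpos z),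
      one_div, inv_mul_eq_div, div_le_iff₀ hp, mul_comm]
  have hsetEq : { z : Fin m → ℝ |
        (∀ k, 1 ≤ k → k ≤ T + 1 →
          Real.log (∑ i, paramTraj n m Atil Ktil x0 k (fun i => Real.exp (z i)) i * ℓ k i)
            < Real.log ε) ∧
        Real.log ((∑ k ∈ Finset.Icc 1 (T + 1), ∑ i,
            (paramTraj n m Atil Ktil x0 k (fun i => Real.exp (z i)) i) ^ p) ^ (1 / p))
          ≤ Real.log Jbar }
      = (⋂ k, ⋂ _ : 1 ≤ k, ⋂ _ : k ≤ T + 1,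
          { z : Fin m → ℝ | Real.log
              (∑ i, paramTraj n m Atil Ktil x0 k (fun i => Real.exp (z i)) i * ℓ k i)
            < Real.log ε })
        ∩ { z : Fin m → ℝ | (∑ k ∈ Finset.Icc 1 (T + 1), ∑ i,
            (paramTraj n m Atil Ktil x0 k (fun i => Real.exp (z i)) i) ^ p)
            ≤ Real.exp (p * Real.log Jbar) } := by
    ext z
    simp only [Set.mem_setOf_eq, Set.mem_inter_iff, Set.mem_iInter]
    exact and_congr Iff.rfl (hiff z)
  rw [hsetEq]
  refine Convex.inter (convex_iInter fun k => convex_iInter fun hk1 =>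
    convex_iInter fun hk2 => ?_) ?_
  · have h := (hg k hk1 hk2).convex_lt (Real.log ε)
    rwa [Set.sep_univ] at h
  · have h := hG.convex_le (Real.exp (p * Real.log Jbar))
    rwa [Set.sep_univ] at h
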